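/- For every n ≥ 1, every 1 ≤ p ≤ 2, every 0 < α < 1/2 and every function f : Ω_n → ℂ, ‖Δ^α f‖_p ≤ K_α ‖ |∇f| ‖_p. -/

import Mathlib

open Real Finset

namespace DiscreteCube

variable {n : ℕ}

/-- The point of the cube `{-1,1}^n` encoded by `x : Fin n → Bool`:
coordinate `j` is `1` if `x j = true` and `-1` otherwise. -/
def sgn (b : Bool) : ℂ := if b then 1 else -1

/-- Negate the `j`-th coordinate. -/
def flip (j : Fin n) (x : Fin n → Bool) : Fin n → Bool :=
  Function.update x j (!(x j))

/-- Discrete partial derivative `(∂_j f)(x) = f(x) - f(x e_j)`. -/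
def pd (j : Fin n) (f : (Fin n → Bool) → ℂ) (x : Fin n → Bool) : ℂ :=
  f x - f (flip j x)

/-- Length of the discrete gradient, `|∇f|(x) = (Σ_j |(∂_j f)(x)|²)^{1/2}`. -/
noncomputable def gradLen (f : (Fin n → Bool) → ℂ) (x : Fin n → Bool) : ℝ :=
  Real.sqrt (∑ j : Fin n, ‖pd j f x‖ ^ 2)

/-- Expectation with respect to the uniform probability on the cube. -/
noncomputable def expect (f : (Fin n → Bool) → ℂ) : ℂ :=
  (∑ x : Fin n → Bool, f x) / 2 ^ n

/-- `L^p` norm (`1 ≤ p < ∞`) of a complex-valued function on the cube. -/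
noncomputable def cLp (p : ℝ) (f : (Fin n → Bool) → ℂ) : ℝ :=
  ((∑ x : Fin n → Bool, ‖f x‖ ^ p) / 2 ^ n) ^ (1 / p)

/-- `L^p` norm (`1 ≤ p < ∞`) of a real-valued function on the cube. -/
noncomputable def rLp (p : ℝ) (g : (Fin n → Bool) → ℝ) : ℝ :=
  ((∑ x : Fin n → Bool, |g x| ^ p) / 2 ^ n) ^ (1 / p)

end DiscreteCube

namespace DiscreteCube

variable {n : ℕ}

/-- Walsh function `ω_A(x) = ∏_{j∈A} x_j`. -/
def walsh (A : Finset (Fin n)) (x : Fin n → Bool) : ℂ := ∏ j ∈ A, sgn (x j)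

/-- Walsh–Fourier coefficient `f̂(A) = 𝔼[f·ω_A]`. -/
noncomputable def coeff (f : (Fin n → Bool) → ℂ) (A : Finset (Fin n)) : ℂ :=
  (∑ x : Fin n → Bool, f x * walsh A x) / 2 ^ n

/-- The operator `cos^{Δ/4}θ`:
`cos^{Δ/4}θ(f) = Σ_A cos^{|A|}θ · f̂(A) ω_A` (the `A = ∅` term is `f̂(∅)`). -/
noncomputable def cosD (θ : ℝ) (f : (Fin n → Bool) → ℂ) (x : Fin n → Bool) : ℂ :=
  ∑ A : Finset (Fin n), (Real.cos θ : ℂ) ^ A.card * coeff f A * walsh A x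

/-- Fractional power of the discrete Laplacian, `Δ^β f = Σ_{A≠∅} (4|A|)^β f̂(A) ω_A`
(for `β > 0` the `A = ∅` term vanishes since `0^β = 0`). -/
noncomputable def deltaPow (β : ℝ) (f : (Fin n → Bool) → ℂ) (x : Fin n → Bool) : ℂ :=
  ∑ A : Finset (Fin n), (((4 * (A.card : ℝ)) ^ β : ℝ) : ℂ) * coeff f A * walsh A x

/-- The constant `K_α = (1/Γ(1−α)) ∫_0^{π/2} (−log cos θ)^{−α} dθ`. -/
noncomputable def Kconst (α : ℝ) : ℝ :=
  (1 / Real.Gamma (1 - α)) * ∫ θ in (0:ℝ)..(Real.pi / 2), (-Real.log (Real.cos θ)) ^ (-α)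

/-- The constant `k_β = (1/Γ(β)) ∫_0^{π/2} (−log cos θ)^{β−1} dθ`. -/
noncomputable def kconst (β : ℝ) : ℝ :=
  (1 / Real.Gamma β) * ∫ θ in (0:ℝ)..(Real.pi / 2), (-Real.log (Real.cos θ)) ^ (β - 1)

end DiscreteCube

namespace DiscreteCube

variable {n : ℕ}


def pmul (x δ : Fin n → Bool) : Fin n → Bool := fun i => x i == δ i

lemma pmul_pmul (x δ : Fin n → Bool) : pmul (pmul x δ) δ = x := by
  funext i
  simp only [pmul]
  cases x i <;> cases δ i <;> rfl

lemma sum_pmul {M : Type*} [AddCommMonoid M] (δ : Fin n → Bool) (F : (Fin n → Bool) → M) :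
    ∑ x : Fin n → Bool, F (pmul x δ) = ∑ x : Fin n → Bool, F x :=
  Fintype.sum_bijective (pmul · δ)
    (Function.Involutive.bijective (fun x => pmul_pmul x δ)) _ _ (fun _ => rfl)

lemma sum_prod_pi {R : Type*} [CommSemiring R] (F : Fin n → Bool → R) :
    ∑ x : Fin n → Bool, ∏ j, F j (x j) = ∏ j, (F j true + F j false) := by
  rw [← Fintype.piFinset_univ, Finset.sum_prod_piFinset]
  exact Finset.prod_congr rfl fun j _ => Fintype.sum_bool _

lemma sgn_mul_sgn (a b : Bool) : sgn a * sgn b = sgn (a == b) := by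
  cases a <;> cases b <;> simp [sgn]

lemma walsh_eq_prod_univ (A : Finset (Fin n)) (x : Fin n → Bool) :
    walsh A x = ∏ j : Fin n, (if j ∈ A then sgn (x j) else 1) := by
  rw [Finset.prod_ite_mem, Finset.univ_inter, walsh]

lemma walsh_pmul (A : Finset (Fin n)) (x δ : Fin n → Bool) :
    walsh A (pmul x δ) = walsh A x * walsh A δ := by
  rw [walsh, walsh, walsh, ← Finset.prod_mul_distrib]
  exact Finset.prod_congr rfl fun j _ => (sgn_mul_sgn (x j) (δ j)).symm

lemma flip_apply_self (j : Fin n) (x : Fin n → Bool) : flip j x j = !(x j) :=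
  Function.update_self _ _ _

lemma flip_apply_ne (j i : Fin n) (x : Fin n → Bool) (h : i ≠ j) : flip j x i = x i :=
  Function.update_of_ne h _ _

lemma sgn_not (b : Bool) : sgn (!b) = -sgn b := by cases b <;> simp [sgn]

lemma walsh_flip (A : Finset (Fin n)) (j : Fin n) (x : Fin n → Bool) :
    walsh A (flip j x) = (if j ∈ A then -1 else 1) * walsh A x := by
  by_cases hj : j ∈ A
  · rw [if_pos hj, walsh, walsh, ← Finset.mul_prod_erase A _ hj,
      ← Finset.mul_prod_erase A (fun i => sgn (x i)) hj, flip_apply_self, sgn_not]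
    rw [neg_one_mul, ← neg_mul]
    congr 1
    exact Finset.prod_congr rfl fun i hi =>
      congrArg sgn (flip_apply_ne j i x (Finset.ne_of_mem_erase hi))
  · rw [if_neg hj, one_mul, walsh, walsh]
    exact Finset.prod_congr rfl fun i hi =>
      congrArg sgn (flip_apply_ne j i x (fun h => hj (h ▸ hi)))

lemma walsh_delta (y x : Fin n → Bool) :
    ∑ A : Finset (Fin n), walsh A y * walsh A x = if y = x then (2 ^ n : ℂ) else 0 := by
  have h1 : ∀ A : Finset (Fin n), walsh A y * walsh A x
      = ∏ j ∈ A, (sgn (y j) * sgn (x j)) := by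
    intro A; rw [walsh, walsh, Finset.prod_mul_distrib]
  have h2 : ∑ A : Finset (Fin n), walsh A y * walsh A x
      = ∏ j : Fin n, (sgn (y j) * sgn (x j) + 1) := by
    rw [Finset.prod_add]
    simp only [Finset.prod_const_one, mul_one]
    rw [← Finset.powerset_univ]
    exact (Finset.sum_congr rfl fun A _ => h1 A).trans rfl
  rw [h2]
  by_cases h : y = x
  · subst h
    rw [if_pos rfl]
    have : ∀ j, sgn (y j) * sgn (y j) + 1 = 2 := by
      intro j; cases y j <;> simp [sgn] <;> norm_num
    rw [Finset.prod_congr rfl fun j _ => this j, Finset.prod_const]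
    norm_num
  · rw [if_neg h]
    obtain ⟨j, hj⟩ : ∃ j, y j ≠ x j := by
      by_contra hc
      push_neg at hc
      exact h (funext hc)
    apply Finset.prod_eq_zero (Finset.mem_univ j)
    cases hy : y j <;> cases hx : x j <;> simp_all [sgn] <;> norm_num

lemma fourier_inversion (f : (Fin n → Bool) → ℂ) (x : Fin n → Bool) :
    f x = ∑ A : Finset (Fin n), coeff f A * walsh A x := by
  have h2n : ((2 : ℂ) ^ n) ≠ 0 := pow_ne_zero _ two_ne_zero
  simp only [coeff, div_mul_eq_mul_div, ← Finset.sum_div]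
  rw [eq_div_iff h2n]
  symm
  calc ∑ A : Finset (Fin n), (∑ y : Fin n → Bool, f y * walsh A y) * walsh A x
      = ∑ y : Fin n → Bool, f y * (∑ A : Finset (Fin n), walsh A y * walsh A x) := by
        simp only [Finset.sum_mul, Finset.mul_sum]
        rw [Finset.sum_comm]
        exact Finset.sum_congr rfl fun y _ => Finset.sum_congr rfl fun A _ => by ring
    _ = ∑ y : Fin n → Bool, f y * (if y = x then (2 ^ n : ℂ) else 0) := by
        exact Finset.sum_congr rfl fun y _ => by rw [walsh_delta]
    _ = f x * 2 ^ n := by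
        rw [Finset.sum_eq_single x]
        · rw [if_pos rfl]
        · intro y _ hy; rw [if_neg hy, mul_zero]
        · intro hx; exact absurd (Finset.mem_univ x) hx

lemma pd_eq_sum (j : Fin n) (f : (Fin n → Bool) → ℂ) (x : Fin n → Bool) :
    pd j f x = ∑ A : Finset (Fin n),
      (if j ∈ A then 2 * coeff f A * walsh A x else 0) := by
  rw [pd, fourier_inversion f x, fourier_inversion f (flip j x), ← Finset.sum_sub_distrib]
  refine Finset.sum_congr rfl fun A _ => ?_
  rw [walsh_flip]
  by_cases hj : j ∈ A
  · rw [if_pos hj, if_pos hj]; ring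
  · rw [if_neg hj, if_neg hj]; ring



def rsgn (b : Bool) : ℝ := cond b 1 (-1)

def walshR (A : Finset (Fin n)) (x : Fin n → Bool) : ℝ := ∏ j ∈ A, rsgn (x j)

lemma walsh_eq_walshR (A : Finset (Fin n)) (x : Fin n → Bool) :
    walsh A x = ((walshR A x : ℝ) : ℂ) := by
  rw [walshR, Complex.ofReal_prod, walsh]
  exact Finset.prod_congr rfl fun j _ => by cases x j <;> simp [sgn, rsgn]

lemma walshR_eq_prod_univ (A : Finset (Fin n)) (x : Fin n → Bool) :
    walshR A x = ∏ j : Fin n, (if j ∈ A then rsgn (x j) else 1) := by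
  rw [Finset.prod_ite_mem, Finset.univ_inter, walshR]

noncomputable def wt (ρ : ℝ) (δ : Fin n → Bool) : ℝ :=
  ∏ j, cond (δ j) ((1 + ρ) / 2) ((1 - ρ) / 2)

noncomputable def xi (s ρ : ℝ) (j : Fin n) (δ : Fin n → Bool) : ℝ :=
  (rsgn (δ j) - ρ) / s

lemma wt_nonneg {ρ : ℝ} (hρ : |ρ| ≤ 1) (δ : Fin n → Bool) : 0 ≤ wt ρ δ := by
  rw [abs_le] at hρ
  exact Finset.prod_nonneg fun j _ => by
    cases δ j <;> simp only [Bool.cond_true, Bool.cond_false] <;> linarith [hρ.1, hρ.2]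

lemma sum_wt (ρ : ℝ) : ∑ δ : Fin n → Bool, wt ρ δ = 1 := by
  simp only [wt]
  rw [sum_prod_pi (fun _ b => cond b ((1 + ρ) / 2) ((1 - ρ) / 2))]
  have h : ∀ j : Fin n, j ∈ (univ : Finset (Fin n)) →
      ((cond true ((1+ρ)/2) ((1-ρ)/2)) + (cond false ((1+ρ)/2) ((1-ρ)/2)) : ℝ) = 1 :=
    fun j _ => by simp only [Bool.cond_true, Bool.cond_false]; ring
  rw [Finset.prod_congr rfl h, Finset.prod_const_one]

lemma xi_prod (s ρ : ℝ) (j : Fin n) (δ : Fin n → Bool) :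
    xi s ρ j δ = ∏ i, (if i = j then (rsgn (δ i) - ρ) / s else 1) := by
  rw [Finset.prod_ite_eq' univ j, if_pos (Finset.mem_univ j)]
  rfl

lemma moment_xi_real (s ρ : ℝ) (hs : s ^ 2 = 1 - ρ ^ 2) (hs0 : s ≠ 0) (j : Fin n)
    (A : Finset (Fin n)) :
    ∑ δ : Fin n → Bool, wt ρ δ * xi s ρ j δ * walshR A δ
      = if j ∈ A then s * ρ ^ (A.card - 1) else 0 := by
  have key : ∀ δ : Fin n → Bool, wt ρ δ * xi s ρ j δ * walshR A δ
      = ∏ i, ((fun i (b : Bool) => (cond b ((1+ρ)/2) ((1-ρ)/2)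
          * (if i = j then (rsgn b - ρ) / s else 1))
          * (if i ∈ A then rsgn b else 1)) i (δ i)) := by
    intro δ
    simp only
    rw [walshR_eq_prod_univ, wt, xi_prod, ← Finset.prod_mul_distrib, ← Finset.prod_mul_distrib]
  rw [Finset.sum_congr rfl fun δ _ => key δ,
    sum_prod_pi (fun i (b : Bool) => (cond b ((1+ρ)/2) ((1-ρ)/2)
      * (if i = j then (rsgn b - ρ) / s else 1))
      * (if i ∈ A then rsgn b else 1))]
  have hfac : ∀ i : Fin n, i ∈ (univ : Finset (Fin n)) →
      ((cond true ((1+ρ)/2) ((1-ρ)/2) * (if i = j then (rsgn true - ρ) / s else 1))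
          * (if i ∈ A then rsgn true else 1)
        + (cond false ((1+ρ)/2) ((1-ρ)/2) * (if i = j then (rsgn false - ρ) / s else 1))
          * (if i ∈ A then rsgn false else 1))
      = if i = j then (if j ∈ A then s else 0) else (if i ∈ A then ρ else 1) := by
    intro i _
    simp only [Bool.cond_true, Bool.cond_false, rsgn]
    by_cases hij : i = j
    · subst hij
      simp only [eq_self_iff_true, if_true]
      by_cases hiA : i ∈ A
      · simp only [hiA, if_true]
        have e : (1+ρ)/2 * ((1 - ρ)/s) * 1 + (1-ρ)/2 * ((-1 - ρ)/s) * (-1)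
            = (1 - ρ^2)/s := by ring
        rw [e, ← hs, sq, mul_div_assoc, div_self hs0, mul_one]
      · simp only [hiA, if_false]
        ring
    · simp only [hij, if_false]
      by_cases hiA : i ∈ A
      · simp only [hiA, if_true]; ring
      · simp only [hiA, if_false]; ring
  rw [Finset.prod_congr rfl hfac]
  by_cases hjA : j ∈ A
  · simp only [hjA, if_true]
    rw [← Finset.mul_prod_erase univ _ (Finset.mem_univ j), if_pos rfl]
    have herase : ∀ i ∈ univ.erase j,
        (if i = j then s else (if i ∈ A then ρ else 1))
          = if i ∈ A then ρ else 1 :=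
      fun i hi => by rw [if_neg (Finset.ne_of_mem_erase hi)]
    rw [Finset.prod_congr rfl herase, Finset.prod_ite_mem, Finset.prod_const]
    have hset : (univ.erase j) ∩ A = A.erase j := by
      ext i
      simp only [Finset.mem_inter, Finset.mem_erase, Finset.mem_univ, and_true, true_and]
    rw [hset, Finset.card_erase_of_mem hjA]
  · simp only [hjA, if_false]
    exact Finset.prod_eq_zero (Finset.mem_univ j) (by simp)

lemma moment_xi (s ρ : ℝ) (hs : s ^ 2 = 1 - ρ ^ 2) (hs0 : s ≠ 0) (j : Fin n)
    (A : Finset (Fin n)) :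
    ∑ δ : Fin n → Bool, ((wt ρ δ * xi s ρ j δ : ℝ) : ℂ) * walsh A δ
      = if j ∈ A then ((s * ρ ^ (A.card - 1) : ℝ) : ℂ) else 0 := by
  have h : ∀ δ : Fin n → Bool, ((wt ρ δ * xi s ρ j δ : ℝ) : ℂ) * walsh A δ
      = ((wt ρ δ * xi s ρ j δ * walshR A δ : ℝ) : ℂ) := by
    intro δ
    rw [walsh_eq_walshR]
    push_cast
    ring
  rw [Finset.sum_congr rfl fun δ _ => h δ, ← Complex.ofReal_sum,
    moment_xi_real s ρ hs hs0 j A]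
  split <;> simp

lemma moment_orth (s ρ : ℝ) (hs : s ^ 2 = 1 - ρ ^ 2) (hs0 : s ≠ 0) (j k : Fin n) :
    ∑ δ : Fin n → Bool, wt ρ δ * (xi s ρ j δ * xi s ρ k δ)
      = if j = k then 1 else 0 := by
  have key : ∀ δ : Fin n → Bool, wt ρ δ * (xi s ρ j δ * xi s ρ k δ)
      = ∏ i, ((fun i (b : Bool) => (cond b ((1+ρ)/2) ((1-ρ)/2)
          * (if i = j then (rsgn b - ρ) / s else 1))
          * (if i = k then (rsgn b - ρ) / s else 1)) i (δ i)) := by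
    intro δ
    simp only
    rw [wt, xi_prod s ρ j, xi_prod s ρ k, ← Finset.prod_mul_distrib,
      ← Finset.prod_mul_distrib]
    exact Finset.prod_congr rfl fun i _ => by ring
  rw [Finset.sum_congr rfl fun δ _ => key δ,
    sum_prod_pi (fun i (b : Bool) => (cond b ((1+ρ)/2) ((1-ρ)/2)
      * (if i = j then (rsgn b - ρ) / s else 1))
      * (if i = k then (rsgn b - ρ) / s else 1))]
  have hfac : ∀ i : Fin n, i ∈ (univ : Finset (Fin n)) →
      ((cond true ((1+ρ)/2) ((1-ρ)/2) * (if i = j then (rsgn true - ρ) / s else 1))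
          * (if i = k then (rsgn true - ρ) / s else 1)
        + (cond false ((1+ρ)/2) ((1-ρ)/2) * (if i = j then (rsgn false - ρ) / s else 1))
          * (if i = k then (rsgn false - ρ) / s else 1))
      = if i = j then (if j = k then 1 else 0) else (if i = k then 0 else 1) := by
    intro i _
    simp only [Bool.cond_true, Bool.cond_false, rsgn]
    by_cases hij : i = j
    · subst hij
      simp only [eq_self_iff_true, if_true]
      by_cases hik : i = k
      · subst hik
        simp only [eq_self_iff_true, if_true]
        have e : (1+ρ)/2 * ((1 - ρ)/s) * ((1 - ρ)/s)
            + (1-ρ)/2 * ((-1 - ρ)/s) * ((-1 - ρ)/s) = (1 - ρ^2)/s^2 := by ring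
        rw [e, ← hs, div_self (pow_ne_zero 2 hs0)]
      · simp only [hik, if_false]
        ring
    · simp only [hij, if_false]
      by_cases hik : i = k
      · subst hik
        simp only [eq_self_iff_true, if_true]
        ring
      · simp only [hik, if_false]
        ring
  rw [Finset.prod_congr rfl hfac]
  by_cases hjk : j = k
  · rw [if_pos hjk]
    subst hjk
    exact Finset.prod_eq_one fun i _ => by by_cases hij : i = j <;> simp [hij]
  · rw [if_neg hjk]
    exact Finset.prod_eq_zero (Finset.mem_univ j) (by simp [hjk])



lemma bessel_real {ι : Type*} [Fintype ι] (W : ι → ℝ) (hW : ∀ i, 0 ≤ W i)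
    (ξ : Fin n → ι → ℝ)
    (horth : ∀ j k, ∑ i : ι, W i * (ξ j i * ξ k i) = if j = k then 1 else 0)
    (u : ι → ℝ) :
    ∑ j : Fin n, (∑ i : ι, W i * ξ j i * u i) ^ 2 ≤ ∑ i : ι, W i * u i ^ 2 := by
  set c : Fin n → ℝ := fun j => ∑ i, W i * ξ j i * u i with hc
  have key : 0 ≤ ∑ i : ι, W i * (u i - ∑ j : Fin n, c j * ξ j i) ^ 2 :=
    Finset.sum_nonneg fun i _ => mul_nonneg (hW i) (sq_nonneg _)
  have hB : ∑ i : ι, W i * u i * (∑ j : Fin n, c j * ξ j i) = ∑ j : Fin n, c j ^ 2 := by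
    calc ∑ i : ι, W i * u i * (∑ j : Fin n, c j * ξ j i)
        = ∑ i : ι, ∑ j : Fin n, c j * (W i * ξ j i * u i) := by
          refine Finset.sum_congr rfl fun i _ => ?_
          rw [Finset.mul_sum]
          exact Finset.sum_congr rfl fun j _ => by ring
      _ = ∑ j : Fin n, ∑ i : ι, c j * (W i * ξ j i * u i) := Finset.sum_comm
      _ = ∑ j : Fin n, c j ^ 2 := by
          refine Finset.sum_congr rfl fun j _ => ?_
          rw [← Finset.mul_sum, pow_two]
  have hC : ∑ i : ι, W i * (∑ j : Fin n, c j * ξ j i) ^ 2 = ∑ j : Fin n, c j ^ 2 := by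
    calc ∑ i : ι, W i * (∑ j : Fin n, c j * ξ j i) ^ 2
        = ∑ i : ι, ∑ j : Fin n, ∑ k : Fin n, (c j * c k) * (W i * (ξ j i * ξ k i)) := by
          refine Finset.sum_congr rfl fun i _ => ?_
          rw [sq, Finset.sum_mul_sum, Finset.mul_sum]
          refine Finset.sum_congr rfl fun j _ => ?_
          rw [Finset.mul_sum]
          exact Finset.sum_congr rfl fun k _ => by ring
      _ = ∑ j : Fin n, ∑ k : Fin n, (c j * c k) * (∑ i : ι, W i * (ξ j i * ξ k i)) := by
          rw [Finset.sum_comm]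
          refine Finset.sum_congr rfl fun j _ => ?_
          rw [Finset.sum_comm]
          exact Finset.sum_congr rfl fun k _ =>
            (Finset.mul_sum univ (fun i => W i * (ξ j i * ξ k i)) (c j * c k)).symm
      _ = ∑ j : Fin n, ∑ k : Fin n, (c j * c k) * (if j = k then 1 else 0) := by
          exact Finset.sum_congr rfl fun j _ => Finset.sum_congr rfl fun k _ => by
            rw [horth j k]
      _ = ∑ j : Fin n, c j ^ 2 := by
          refine Finset.sum_congr rfl fun j _ => ?_
          rw [Finset.sum_eq_single j]
          · rw [if_pos rfl]; ring
          · intro k _ hk; rw [if_neg (fun h => hk h.symm), mul_zero]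
          · intro h; exact absurd (Finset.mem_univ j) h
  have expand : ∑ i : ι, W i * (u i - ∑ j : Fin n, c j * ξ j i) ^ 2
      = ∑ i : ι, W i * u i ^ 2 - ∑ j : Fin n, c j ^ 2 := by
    have h1 : ∀ i : ι, W i * (u i - ∑ j : Fin n, c j * ξ j i) ^ 2
        = W i * u i ^ 2 - 2 * (W i * u i * (∑ j : Fin n, c j * ξ j i))
          + W i * (∑ j : Fin n, c j * ξ j i) ^ 2 := fun i => by ring
    rw [Finset.sum_congr rfl fun i _ => h1 i, Finset.sum_add_distrib,
      Finset.sum_sub_distrib, ← Finset.mul_sum, hB, hC]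
    ring
  rw [expand] at key
  linarith

lemma bessel_complex {ι : Type*} [Fintype ι] (W : ι → ℝ) (hW : ∀ i, 0 ≤ W i)
    (ξ : Fin n → ι → ℝ)
    (horth : ∀ j k, ∑ i : ι, W i * (ξ j i * ξ k i) = if j = k then 1 else 0)
    (g : ι → ℂ) :
    ∑ j : Fin n, ‖∑ i : ι, ((W i * ξ j i : ℝ) : ℂ) * g i‖ ^ 2
      ≤ ∑ i : ι, W i * ‖g i‖ ^ 2 := by
  have hre := bessel_real W hW ξ horth (fun i => (g i).re)
  have him := bessel_real W hW ξ horth (fun i => (g i).im)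
  have habs : ∀ j : Fin n, ‖∑ i : ι, ((W i * ξ j i : ℝ) : ℂ) * g i‖ ^ 2
      = (∑ i : ι, W i * ξ j i * (g i).re) ^ 2 + (∑ i : ι, W i * ξ j i * (g i).im) ^ 2 := by
    intro j
    rw [Complex.sq_norm, Complex.normSq_apply, Complex.re_sum, Complex.im_sum]
    simp only [Complex.re_ofReal_mul, Complex.im_ofReal_mul]
    ring
  have hrhs : ∀ i : ι, W i * ‖g i‖ ^ 2
      = W i * (g i).re ^ 2 + W i * (g i).im ^ 2 := by
    intro i
    rw [Complex.sq_norm, Complex.normSq_apply]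
    ring
  rw [Finset.sum_congr rfl fun j _ => habs j, Finset.sum_congr rfl fun i _ => hrhs i,
    Finset.sum_add_distrib, Finset.sum_add_distrib]
  exact add_le_add hre him

lemma sum_mul_le_sqrt_mul_sqrt {ι : Type*} [Fintype ι] (a b : ι → ℝ) :
    ∑ i : ι, a i * b i ≤ Real.sqrt (∑ i : ι, a i ^ 2) * Real.sqrt (∑ i : ι, b i ^ 2) := by
  rcases le_or_gt (∑ i : ι, a i * b i) 0 with h | h
  · exact h.trans (mul_nonneg (Real.sqrt_nonneg _) (Real.sqrt_nonneg _))
  · rw [← Real.sqrt_mul (Finset.sum_nonneg fun i _ => sq_nonneg (a i))]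
    rw [show (∑ i : ι, a i * b i) = Real.sqrt ((∑ i : ι, a i * b i) ^ 2) by
      rw [Real.sqrt_sq h.le]]
    exact Real.sqrt_le_sqrt (Finset.sum_mul_sq_le_sq_mul_sq univ a b)

noncomputable def Dop (θ : ℝ) (f : (Fin n → Bool) → ℂ) (x : Fin n → Bool) : ℂ :=
  ∑ A : Finset (Fin n),
    (((A.card : ℝ) * Real.sin θ * Real.cos θ ^ (A.card - 1) : ℝ) : ℂ) * coeff f A * walsh A x

lemma step1 (θ : ℝ) (hs0 : Real.sin θ ≠ 0) (f g : (Fin n → Bool) → ℂ) :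
    ∑ x : Fin n → Bool, g x * Dop θ f x
      = ∑ y : Fin n → Bool, ∑ j : Fin n, (pd j f y / 2) *
          (∑ δ : Fin n → Bool,
            ((wt (Real.cos θ) δ * xi (Real.sin θ) (Real.cos θ) j δ : ℝ) : ℂ)
            * g (pmul y δ)) := by
  have hsq : Real.sin θ ^ 2 = 1 - Real.cos θ ^ 2 := Real.sin_sq θ
  set s := Real.sin θ
  set ρ := Real.cos θ
  set M : ℂ := ∑ A : Finset (Fin n), (A.card : ℂ) * ((s * ρ ^ (A.card - 1) : ℝ) : ℂ)
    * coeff f A * (∑ z : Fin n → Bool, walsh A z * g z) with hM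
  have hpd : ∀ (j : Fin n) (y : Fin n → Bool), pd j f y / 2
      = ∑ A : Finset (Fin n), (if j ∈ A then coeff f A * walsh A y else 0) := by
    intro j y
    rw [pd_eq_sum, Finset.sum_div]
    refine Finset.sum_congr rfl fun A _ => ?_
    split
    · ring
    · simp
  have key : ∀ (A : Finset (Fin n)) (j : Fin n),
      ∑ y : Fin n → Bool, walsh A y *
          (∑ δ : Fin n → Bool, ((wt ρ δ * xi s ρ j δ : ℝ) : ℂ) * g (pmul y δ))
        = (if j ∈ A then ((s * ρ ^ (A.card - 1) : ℝ) : ℂ) else 0)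
            * (∑ z : Fin n → Bool, walsh A z * g z) := by
    intro A j
    have h1 : ∀ δ : Fin n → Bool,
        ∑ y : Fin n → Bool, walsh A y * (((wt ρ δ * xi s ρ j δ : ℝ) : ℂ) * g (pmul y δ))
          = ((wt ρ δ * xi s ρ j δ : ℝ) : ℂ) * walsh A δ
              * ∑ z : Fin n → Bool, walsh A z * g z := by
      intro δ
      calc ∑ y : Fin n → Bool, walsh A y * (((wt ρ δ * xi s ρ j δ : ℝ) : ℂ) * g (pmul y δ))
          = ∑ z : Fin n → Bool,
              walsh A (pmul z δ) * (((wt ρ δ * xi s ρ j δ : ℝ) : ℂ) * g (pmul (pmul z δ) δ)) :=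
            (sum_pmul δ fun y => walsh A y * (((wt ρ δ * xi s ρ j δ : ℝ) : ℂ) * g (pmul y δ))).symm
        _ = ∑ z : Fin n → Bool,
              ((wt ρ δ * xi s ρ j δ : ℝ) : ℂ) * walsh A δ * (walsh A z * g z) := by
            refine Finset.sum_congr rfl fun z _ => ?_
            rw [pmul_pmul, walsh_pmul]
            ring
        _ = _ := by rw [← Finset.mul_sum]
    calc ∑ y : Fin n → Bool, walsh A y *
            (∑ δ : Fin n → Bool, ((wt ρ δ * xi s ρ j δ : ℝ) : ℂ) * g (pmul y δ))
        = ∑ y : Fin n → Bool, ∑ δ : Fin n → Bool,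
            walsh A y * (((wt ρ δ * xi s ρ j δ : ℝ) : ℂ) * g (pmul y δ)) := by
          exact Finset.sum_congr rfl fun y _ => Finset.mul_sum _ _ _
      _ = ∑ δ : Fin n → Bool, ∑ y : Fin n → Bool,
            walsh A y * (((wt ρ δ * xi s ρ j δ : ℝ) : ℂ) * g (pmul y δ)) := Finset.sum_comm
      _ = ∑ δ : Fin n → Bool, ((wt ρ δ * xi s ρ j δ : ℝ) : ℂ) * walsh A δ
            * ∑ z : Fin n → Bool, walsh A z * g z :=
          Finset.sum_congr rfl fun δ _ => h1 δ
      _ = (∑ δ : Fin n → Bool, ((wt ρ δ * xi s ρ j δ : ℝ) : ℂ) * walsh A δ)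
            * ∑ z : Fin n → Bool, walsh A z * g z := by rw [Finset.sum_mul]
      _ = _ := by rw [moment_xi s ρ hsq hs0 j A]
  have hL : ∑ x : Fin n → Bool, g x * Dop θ f x = M := by
    calc ∑ x : Fin n → Bool, g x * Dop θ f x
        = ∑ x : Fin n → Bool, ∑ A : Finset (Fin n),
            g x * ((((A.card : ℝ) * s * ρ ^ (A.card - 1) : ℝ) : ℂ) * coeff f A * walsh A x) := by
          refine Finset.sum_congr rfl fun x _ => ?_
          simp only [Dop]
          exact Finset.mul_sum _ _ _
      _ = ∑ A : Finset (Fin n), ∑ x : Fin n → Bool,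
            g x * ((((A.card : ℝ) * s * ρ ^ (A.card - 1) : ℝ) : ℂ) * coeff f A * walsh A x) :=
          Finset.sum_comm
      _ = M := by
          rw [hM]
          refine Finset.sum_congr rfl fun A _ => ?_
          rw [Finset.mul_sum (univ : Finset (Fin n → Bool)) (fun z => walsh A z * g z)
            ((A.card : ℂ) * ((s * ρ ^ (A.card - 1) : ℝ) : ℂ) * coeff f A)]
          refine Finset.sum_congr rfl fun x _ => ?_
          push_cast
          ring
  have hR : ∑ y : Fin n → Bool, ∑ j : Fin n, (pd j f y / 2) *
      (∑ δ : Fin n → Bool, ((wt ρ δ * xi s ρ j δ : ℝ) : ℂ) * g (pmul y δ)) = M := by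
    calc ∑ y : Fin n → Bool, ∑ j : Fin n, (pd j f y / 2) *
          (∑ δ : Fin n → Bool, ((wt ρ δ * xi s ρ j δ : ℝ) : ℂ) * g (pmul y δ))
        = ∑ y : Fin n → Bool, ∑ j : Fin n, ∑ A : Finset (Fin n),
            (if j ∈ A then coeff f A * walsh A y else 0) *
              (∑ δ : Fin n → Bool, ((wt ρ δ * xi s ρ j δ : ℝ) : ℂ) * g (pmul y δ)) := by
          refine Finset.sum_congr rfl fun y _ => Finset.sum_congr rfl fun j _ => ?_
          rw [hpd j y, Finset.sum_mul]
      _ = ∑ j : Fin n, ∑ A : Finset (Fin n), ∑ y : Fin n → Bool,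
            (if j ∈ A then coeff f A * walsh A y else 0) *
              (∑ δ : Fin n → Bool, ((wt ρ δ * xi s ρ j δ : ℝ) : ℂ) * g (pmul y δ)) := by
          rw [Finset.sum_comm]
          exact Finset.sum_congr rfl fun j _ => Finset.sum_comm
      _ = ∑ j : Fin n, ∑ A : Finset (Fin n),
            (if j ∈ A then coeff f A * ((if j ∈ A then ((s * ρ ^ (A.card - 1) : ℝ) : ℂ) else 0)
              * (∑ z : Fin n → Bool, walsh A z * g z)) else 0) := by
          refine Finset.sum_congr rfl fun j _ => Finset.sum_congr rfl fun A _ => ?_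
          by_cases hjA : j ∈ A
          · simp only [hjA, if_true]
            have h2 : ∑ x : Fin n → Bool, coeff f A * walsh A x *
                (∑ δ : Fin n → Bool, ((wt ρ δ * xi s ρ j δ : ℝ) : ℂ) * g (pmul x δ))
                = coeff f A * ∑ y : Fin n → Bool, walsh A y *
                  (∑ δ : Fin n → Bool, ((wt ρ δ * xi s ρ j δ : ℝ) : ℂ) * g (pmul y δ)) := by
              rw [Finset.mul_sum]
              exact Finset.sum_congr rfl fun x _ => by ring
            rw [h2, key A j, if_pos hjA]
          · simp only [hjA, if_false]
            simp
      _ = ∑ A : Finset (Fin n), ∑ j : Fin n,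
            (if j ∈ A then coeff f A * (((s * ρ ^ (A.card - 1) : ℝ) : ℂ)
              * (∑ z : Fin n → Bool, walsh A z * g z)) else 0) := by
          rw [Finset.sum_comm]
          refine Finset.sum_congr rfl fun A _ => Finset.sum_congr rfl fun j _ => ?_
          by_cases hjA : j ∈ A <;> simp [hjA]
      _ = M := by
          rw [hM]
          refine Finset.sum_congr rfl fun A _ => ?_
          rw [Finset.sum_ite_mem, Finset.univ_inter, Finset.sum_const, nsmul_eq_mul]
          ring
  rw [hL, hR]



noncomputable def gG (θ : ℝ) (g : (Fin n → Bool) → ℂ) (y : Fin n → Bool) : ℝ :=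
  Real.sqrt (∑ δ : Fin n → Bool, wt (Real.cos θ) δ * ‖g (pmul y δ)‖ ^ 2)

lemma gG_nonneg (θ : ℝ) (g : (Fin n → Bool) → ℂ) (y : Fin n → Bool) : 0 ≤ gG θ g y :=
  Real.sqrt_nonneg _

lemma gradLen_nonneg (f : (Fin n → Bool) → ℂ) (y : Fin n → Bool) : 0 ≤ gradLen f y :=
  Real.sqrt_nonneg _

lemma bilinear (θ : ℝ) (hθ : 0 < Real.sin θ) (f g : (Fin n → Bool) → ℂ) :
    ‖∑ x : Fin n → Bool, g x * Dop θ f x‖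
      ≤ (1 / 2) * ∑ y : Fin n → Bool, gradLen f y * gG θ g y := by
  have hρ : |Real.cos θ| ≤ 1 := Real.abs_cos_le_one θ
  have hW : ∀ δ : Fin n → Bool, 0 ≤ wt (Real.cos θ) δ := wt_nonneg hρ
  have horth := moment_orth (n := n) (Real.sin θ) (Real.cos θ) (Real.sin_sq θ) hθ.ne'
  rw [step1 θ hθ.ne' f g]
  refine le_trans (norm_sum_le _ _) ?_
  rw [Finset.mul_sum]
  refine Finset.sum_le_sum fun y _ => ?_
  calc ‖∑ j : Fin n, (pd j f y / 2) *
        (∑ δ : Fin n → Bool,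
          ((wt (Real.cos θ) δ * xi (Real.sin θ) (Real.cos θ) j δ : ℝ) : ℂ) * g (pmul y δ))‖
      ≤ ∑ j : Fin n, ‖(pd j f y / 2) *
        (∑ δ : Fin n → Bool,
          ((wt (Real.cos θ) δ * xi (Real.sin θ) (Real.cos θ) j δ : ℝ) : ℂ) * g (pmul y δ))‖ :=
        norm_sum_le _ _
    _ = ∑ j : Fin n, (‖pd j f y‖ / 2) * ‖∑ δ : Fin n → Bool,
          ((wt (Real.cos θ) δ * xi (Real.sin θ) (Real.cos θ) j δ : ℝ) : ℂ) * g (pmul y δ)‖ := by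
        refine Finset.sum_congr rfl fun j _ => ?_
        rw [norm_mul, norm_div, Complex.norm_two]
    _ ≤ Real.sqrt (∑ j : Fin n, (‖pd j f y‖ / 2) ^ 2) *
        Real.sqrt (∑ j : Fin n, ‖∑ δ : Fin n → Bool,
            ((wt (Real.cos θ) δ * xi (Real.sin θ) (Real.cos θ) j δ : ℝ) : ℂ)
              * g (pmul y δ)‖ ^ 2) :=
        sum_mul_le_sqrt_mul_sqrt _ _
    _ ≤ (gradLen f y / 2) * gG θ g y := by
        have h1 : Real.sqrt (∑ j : Fin n, (‖pd j f y‖ / 2) ^ 2)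
            = gradLen f y / 2 := by
          have e : ∑ j : Fin n, (‖pd j f y‖ / 2) ^ 2
              = (∑ j : Fin n, ‖pd j f y‖ ^ 2) / 4 := by
            rw [Finset.sum_div]
            exact Finset.sum_congr rfl fun j _ => by ring
          rw [e, Real.sqrt_div (Finset.sum_nonneg fun j _ => sq_nonneg _),
            show (4 : ℝ) = 2 ^ 2 by norm_num, Real.sqrt_sq (by norm_num : (0:ℝ) ≤ 2), gradLen]
        have h2 : Real.sqrt (∑ j : Fin n, ‖∑ δ : Fin n → Bool,
              ((wt (Real.cos θ) δ * xi (Real.sin θ) (Real.cos θ) j δ : ℝ) : ℂ)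
                * g (pmul y δ)‖ ^ 2) ≤ gG θ g y := by
          rw [gG]
          exact Real.sqrt_le_sqrt
            (bessel_complex (wt (Real.cos θ)) hW (xi (Real.sin θ) (Real.cos θ)) horth
              (fun δ => g (pmul y δ)))
        rw [h1]
        exact mul_le_mul_of_nonneg_left h2 (div_nonneg (gradLen_nonneg f y) (by norm_num))
    _ = 1 / 2 * (gradLen f y * gG θ g y) := by ring



lemma sum_gG_pow_le (θ : ℝ) (g : (Fin n → Bool) → ℂ) {q : ℝ} (hq2 : 2 ≤ q) :
    ∑ y : Fin n → Bool, gG θ g y ^ q ≤ ∑ x : Fin n → Bool, ‖g x‖ ^ q := by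
  have hρ : |Real.cos θ| ≤ 1 := Real.abs_cos_le_one θ
  have hW : ∀ δ : Fin n → Bool, 0 ≤ wt (Real.cos θ) δ := wt_nonneg hρ
  have hgq : ∀ a : ℝ, 0 ≤ a → (a ^ (2:ℕ)) ^ (q/2) = a ^ q := by
    intro a ha
    rw [← Real.rpow_natCast a 2, ← Real.rpow_mul ha]
    congr 1
    push_cast
    ring
  calc ∑ y : Fin n → Bool, gG θ g y ^ q
      = ∑ y : Fin n → Bool,
          (∑ δ : Fin n → Bool, wt (Real.cos θ) δ * ‖g (pmul y δ)‖ ^ 2) ^ (q/2) := by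
        refine Finset.sum_congr rfl fun y _ => ?_
        have hS : 0 ≤ ∑ δ : Fin n → Bool, wt (Real.cos θ) δ * ‖g (pmul y δ)‖ ^ 2 :=
          Finset.sum_nonneg fun δ _ => mul_nonneg (hW δ) (sq_nonneg _)
        rw [gG, Real.sqrt_eq_rpow, ← Real.rpow_mul hS]
        congr 1
        ring
    _ ≤ ∑ y : Fin n → Bool,
          ∑ δ : Fin n → Bool, wt (Real.cos θ) δ * (‖g (pmul y δ)‖ ^ 2) ^ (q/2) := by
        refine Finset.sum_le_sum fun y _ => ?_
        exact Real.rpow_arith_mean_le_arith_mean_rpow univ (wt (Real.cos θ))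
          (fun δ => ‖g (pmul y δ)‖ ^ 2) (fun δ _ => hW δ) (sum_wt _)
          (fun δ _ => sq_nonneg _) (by linarith)
    _ = ∑ δ : Fin n → Bool, wt (Real.cos θ) δ * ∑ y : Fin n → Bool,
          ‖g (pmul y δ)‖ ^ q := by
        rw [Finset.sum_comm]
        refine Finset.sum_congr rfl fun δ _ => ?_
        rw [Finset.mul_sum]
        exact Finset.sum_congr rfl fun y _ => by
          rw [hgq _ (norm_nonneg _)]
    _ = ∑ δ : Fin n → Bool, wt (Real.cos θ) δ * ∑ x : Fin n → Bool, ‖g x‖ ^ q := by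
        refine Finset.sum_congr rfl fun δ _ => ?_
        rw [sum_pmul δ (fun x => ‖g x‖ ^ q)]
    _ = ∑ x : Fin n → Bool, ‖g x‖ ^ q := by
        rw [← Finset.sum_mul, sum_wt, one_mul]

lemma pairing_bound (θ : ℝ) (hθ : 0 < Real.sin θ) (f g : (Fin n → Bool) → ℂ)
    {p q : ℝ} (hpq : p.HolderConjugate q) (hq2 : 2 ≤ q) :
    ‖∑ x : Fin n → Bool, g x * Dop θ f x‖
      ≤ 1/2 * ((∑ y : Fin n → Bool, gradLen f y ^ p) ^ (1/p)
          * (∑ x : Fin n → Bool, ‖g x‖ ^ q) ^ (1/q)) := by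
  refine (bilinear θ hθ f g).trans ?_
  refine mul_le_mul_of_nonneg_left ?_ (by norm_num)
  calc ∑ y : Fin n → Bool, gradLen f y * gG θ g y
      ≤ (∑ y : Fin n → Bool, gradLen f y ^ p) ^ (1/p)
          * (∑ y : Fin n → Bool, gG θ g y ^ q) ^ (1/q) :=
        Real.inner_le_Lp_mul_Lq_of_nonneg univ hpq
          (fun y _ => gradLen_nonneg f y) (fun y _ => gG_nonneg θ g y)
    _ ≤ (∑ y : Fin n → Bool, gradLen f y ^ p) ^ (1/p)
          * (∑ x : Fin n → Bool, ‖g x‖ ^ q) ^ (1/q) := by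
        refine mul_le_mul_of_nonneg_left ?_
          (Real.rpow_nonneg
            (Finset.sum_nonneg fun y _ => Real.rpow_nonneg (gradLen_nonneg f y) _) _)
        exact Real.rpow_le_rpow
          (Finset.sum_nonneg fun y _ => Real.rpow_nonneg (gG_nonneg θ g y) _)
          (sum_gG_pow_le θ g hq2) hpq.symm.one_div_nonneg

lemma pairing_bound_one (θ : ℝ) (hθ : 0 < Real.sin θ) (f g : (Fin n → Bool) → ℂ)
    (hg : ∀ x : Fin n → Bool, ‖g x‖ ≤ 1) :
    ‖∑ x : Fin n → Bool, g x * Dop θ f x‖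
      ≤ 1/2 * ∑ y : Fin n → Bool, gradLen f y := by
  refine (bilinear θ hθ f g).trans ?_
  refine mul_le_mul_of_nonneg_left ?_ (by norm_num)
  have hρ : |Real.cos θ| ≤ 1 := Real.abs_cos_le_one θ
  have hW : ∀ δ : Fin n → Bool, 0 ≤ wt (Real.cos θ) δ := wt_nonneg hρ
  have hG1 : ∀ y : Fin n → Bool, gG θ g y ≤ 1 := by
    intro y
    rw [gG]
    rw [show (1:ℝ) = Real.sqrt 1 by rw [Real.sqrt_one]]
    refine Real.sqrt_le_sqrt ?_
    calc ∑ δ : Fin n → Bool, wt (Real.cos θ) δ * ‖g (pmul y δ)‖ ^ 2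
        ≤ ∑ δ : Fin n → Bool, wt (Real.cos θ) δ * 1 :=
          Finset.sum_le_sum fun δ _ => mul_le_mul_of_nonneg_left
            (pow_le_one₀ (norm_nonneg _) (hg _)) (hW δ)
      _ = 1 := by
          simp only [mul_one]
          exact sum_wt _
  refine Finset.sum_le_sum fun y _ => ?_
  simpa using mul_le_mul_of_nonneg_left (hG1 y) (gradLen_nonneg f y)

open MeasureTheory


variable {α : ℝ}

lemma coslt1 {θ : ℝ} (hθ : θ ∈ Set.Ioo 0 (Real.pi/2)) : Real.cos θ < 1 := by
  have := Real.cos_lt_cos_of_nonneg_of_le_pi (le_refl 0)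
    (by linarith [hθ.2, Real.pi_pos]) hθ.1
  rwa [Real.cos_zero] at this

lemma cospos {θ : ℝ} (hθ : θ ∈ Set.Ioo 0 (Real.pi/2)) : 0 < Real.cos θ :=
  Real.cos_pos_of_mem_Ioo ⟨by linarith [hθ.1, Real.pi_pos], hθ.2⟩

lemma nlc_pos {θ : ℝ} (hθ : θ ∈ Set.Ioo 0 (Real.pi/2)) : 0 < -Real.log (Real.cos θ) :=
  neg_pos.2 (Real.log_neg (cospos hθ) (coslt1 hθ))

lemma nlc_lower {θ : ℝ} (hθ : θ ∈ Set.Ioo 0 (Real.pi/2)) :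
    2 / Real.pi ^ 2 * θ ^ 2 ≤ -Real.log (Real.cos θ) := by
  have h1 : Real.log (Real.cos θ) ≤ Real.cos θ - 1 :=
    Real.log_le_sub_one_of_pos (cospos hθ)
  have h2 : Real.cos θ ≤ 1 - 2 / Real.pi ^ 2 * θ ^ 2 := by
    refine Real.cos_le_one_sub_mul_cos_sq ?_
    rw [abs_of_nonneg hθ.1.le]
    linarith [hθ.2, Real.pi_pos]
  linarith

lemma w_contOn : ContinuousOn (fun θ : ℝ => (-Real.log (Real.cos θ)) ^ (-α))
    (Set.Ioo 0 (Real.pi/2)) := by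
  refine ContinuousOn.rpow_const ?_ (fun θ hθ => Or.inl (nlc_pos hθ).ne')
  exact (Real.continuousOn_log.comp Real.continuous_cos.continuousOn
    (fun θ hθ => (cospos hθ).ne')).neg

lemma w_integrableOn (hα0 : 0 < α) (hα1 : α < 1/2) :
    IntegrableOn (fun θ : ℝ => (-Real.log (Real.cos θ)) ^ (-α))
      (Set.Ioo 0 (Real.pi/2)) := by
  have hdom : IntegrableOn (fun θ : ℝ => (2 / Real.pi ^ 2) ^ (-α) * θ ^ (-(2*α)))
      (Set.Ioo 0 (Real.pi/2)) := by
    have h1 : IntervalIntegrable (fun θ : ℝ => θ ^ (-(2*α))) volume 0 (Real.pi/2) :=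
      intervalIntegral.intervalIntegrable_rpow' (by linarith)
    have h2 := (intervalIntegrable_iff_integrableOn_Ioo_of_le
      (by positivity : (0:ℝ) ≤ Real.pi/2)).mp h1
    exact h2.const_mul _
  refine Integrable.mono hdom
    (w_contOn.aestronglyMeasurable measurableSet_Ioo) ?_
  refine (ae_restrict_iff' measurableSet_Ioo).2 (Filter.Eventually.of_forall fun θ hθ => ?_)
  have hb : 0 < 2 / Real.pi ^ 2 * θ ^ 2 := by
    have := hθ.1
    have := Real.pi_pos
    positivity
  have hle : (-Real.log (Real.cos θ)) ^ (-α) ≤ (2 / Real.pi ^ 2 * θ ^ 2) ^ (-α) :=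
    Real.rpow_le_rpow_of_nonpos hb (nlc_lower hθ) (by linarith)
  have heq : (2 / Real.pi ^ 2 * θ ^ 2 : ℝ) ^ (-α)
      = (2 / Real.pi ^ 2) ^ (-α) * θ ^ (-(2*α)) := by
    rw [Real.mul_rpow (by positivity) (sq_nonneg θ)]
    congr 1
    rw [← Real.rpow_natCast θ 2, ← Real.rpow_mul hθ.1.le]
    congr 1
    push_cast
    ring
  calc ‖(-Real.log (Real.cos θ)) ^ (-α)‖
      = (-Real.log (Real.cos θ)) ^ (-α) := by
        rw [Real.norm_eq_abs, abs_of_nonneg (Real.rpow_nonneg (nlc_pos hθ).le _)]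
    _ ≤ (2 / Real.pi ^ 2 * θ ^ 2) ^ (-α) := hle
    _ = (2 / Real.pi ^ 2) ^ (-α) * θ ^ (-(2*α)) := heq
    _ ≤ ‖(2 / Real.pi ^ 2) ^ (-α) * θ ^ (-(2*α))‖ :=
        (le_abs_self _).trans_eq (Real.norm_eq_abs _).symm

lemma hasDeriv_nlc {θ : ℝ} (hθ : θ ∈ Set.Ioo 0 (Real.pi/2)) :
    HasDerivWithinAt (fun t : ℝ => -Real.log (Real.cos t))
      (Real.sin θ / Real.cos θ) (Set.Ioo 0 (Real.pi/2)) θ := by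
  have hc : Real.cos θ ≠ 0 := (cospos hθ).ne'
  have hcos : HasDerivAt Real.cos (-Real.sin θ) θ := Real.hasDerivAt_cos θ
  have hlog := (hcos.log hc).neg
  have : -(-Real.sin θ / Real.cos θ) = Real.sin θ / Real.cos θ := by ring
  rw [this] at hlog
  exact hlog.hasDerivWithinAt

lemma inj_nlc : Set.InjOn (fun t : ℝ => -Real.log (Real.cos t)) (Set.Ioo 0 (Real.pi/2)) := by
  have hmono : StrictMonoOn (fun t : ℝ => -Real.log (Real.cos t)) (Set.Ioo 0 (Real.pi/2)) := by
    intro a ha b hb hab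
    have h1 : Real.cos b < Real.cos a :=
      Real.cos_lt_cos_of_nonneg_of_le_pi ha.1.le (by linarith [hb.2, Real.pi_pos]) hab
    exact neg_lt_neg (Real.log_lt_log (cospos hb) h1)
  exact hmono.injOn

lemma img_nlc : (fun t : ℝ => -Real.log (Real.cos t)) '' (Set.Ioo 0 (Real.pi/2))
    = Set.Ioi 0 := by
  ext t
  constructor
  · rintro ⟨θ, hθ, rfl⟩
    exact nlc_pos hθ
  · intro ht
    have ht' : (0:ℝ) < t := ht
    have he1 : Real.exp (-t) < 1 := Real.exp_lt_one_iff.2 (by linarith)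
    have he0 : 0 < Real.exp (-t) := Real.exp_pos _
    refine ⟨Real.arccos (Real.exp (-t)), ⟨Real.arccos_pos.2 he1,
      Real.arccos_lt_pi_div_two.2 he0⟩, ?_⟩
    show -Real.log (Real.cos (Real.arccos (Real.exp (-t)))) = t
    rw [Real.cos_arccos (by linarith) he1.le, Real.log_exp]
    ring

lemma g_integrable (hα1 : α < 1) {k : ℕ} (hk : 1 ≤ k) :
    IntegrableOn (fun t : ℝ => t ^ (-α) * Real.exp (-((k:ℝ) * t))) (Set.Ioi 0) := by
  have hG := Real.GammaIntegral_convergent (by linarith : (0:ℝ) < 1 - α)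
  have hcont : ContinuousOn (fun t : ℝ => t ^ (-α) * Real.exp (-((k:ℝ) * t)))
      (Set.Ioi 0) := by
    refine ContinuousOn.mul ?_ ?_
    · exact ContinuousOn.rpow_const continuousOn_id (fun t ht => Or.inl (ne_of_gt ht))
    · exact (Real.continuous_exp.comp (continuous_const.mul continuous_id).neg).continuousOn
  refine Integrable.mono hG (hcont.aestronglyMeasurable measurableSet_Ioi) ?_
  refine (ae_restrict_iff' measurableSet_Ioi).2 (Filter.Eventually.of_forall fun t ht => ?_)
  have ht' : (0:ℝ) < t := ht
  rw [Real.norm_eq_abs, Real.norm_eq_abs, abs_of_nonneg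
    (mul_nonneg (Real.rpow_nonneg ht'.le _) (Real.exp_pos _).le),
    abs_of_nonneg (mul_nonneg (Real.exp_pos _).le (Real.rpow_nonneg ht'.le _))]
  rw [show (1-α-1 : ℝ) = -α by ring, mul_comm (Real.exp (-t))]
  refine mul_le_mul_of_nonneg_left ?_ (Real.rpow_nonneg ht'.le _)
  refine Real.exp_le_exp.2 ?_
  have h1k : (1:ℝ) ≤ (k:ℝ) := by exact_mod_cast hk
  nlinarith

lemma smul_eq_kernel {k : ℕ} (hk : 1 ≤ k) {θ : ℝ} (hθ : θ ∈ Set.Ioo 0 (Real.pi/2)) :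
    |Real.sin θ / Real.cos θ| •
        ((-Real.log (Real.cos θ)) ^ (-α)
          * Real.exp (-((k:ℝ) * (-Real.log (Real.cos θ)))))
      = (-Real.log (Real.cos θ)) ^ (-α) * (Real.sin θ * Real.cos θ ^ (k - 1)) := by
  have hc : 0 < Real.cos θ := cospos hθ
  have hsin : 0 ≤ Real.sin θ := Real.sin_nonneg_of_nonneg_of_le_pi hθ.1.le
    (by linarith [hθ.2, Real.pi_pos])
  have hexp : Real.exp (-((k:ℝ) * (-Real.log (Real.cos θ)))) = Real.cos θ ^ k := by
    have : -((k:ℝ) * (-Real.log (Real.cos θ))) = (k:ℝ) * Real.log (Real.cos θ) := by ring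
    rw [this, Real.exp_nat_mul, Real.exp_log hc]
  have hpow : Real.cos θ ^ k = Real.cos θ ^ (k - 1) * Real.cos θ := by
    conv_lhs => rw [show k = (k-1) + 1 from (Nat.succ_pred_eq_of_pos hk).symm]
    rw [pow_succ]
  rw [smul_eq_mul, hexp, hpow, abs_of_nonneg (div_nonneg hsin hc.le)]
  field_simp

lemma key_integral (hα0 : 0 < α) (hα1 : α < 1) {k : ℕ} (hk : 1 ≤ k) :
    ∫ θ in Set.Ioo 0 (Real.pi/2),
        (-Real.log (Real.cos θ)) ^ (-α) * ((k:ℝ) * Real.sin θ * Real.cos θ ^ (k - 1))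
      = Real.Gamma (1 - α) * (k:ℝ) ^ α := by
  have hsub := MeasureTheory.integral_image_eq_integral_abs_deriv_smul
    measurableSet_Ioo (fun θ hθ => hasDeriv_nlc hθ) inj_nlc
    (fun t : ℝ => t ^ (-α) * Real.exp (-((k:ℝ) * t)))
  rw [img_nlc] at hsub
  have hIoi : ∫ t in Set.Ioi 0, t ^ (-α) * Real.exp (-((k:ℝ) * t))
      = (1/(k:ℝ)) ^ (1-α) * Real.Gamma (1-α) := by
    have hkpos : (0:ℝ) < (k:ℝ) := by
      have : 0 < k := hk
      exact_mod_cast this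
    have := Real.integral_rpow_mul_exp_neg_mul_Ioi (by linarith : (0:ℝ) < 1 - α) hkpos
    rw [show (1 - α - 1 : ℝ) = -α by ring] at this
    exact this
  have hker : ∫ θ in Set.Ioo 0 (Real.pi/2),
      |Real.sin θ / Real.cos θ| •
        ((fun t : ℝ => t ^ (-α) * Real.exp (-((k:ℝ) * t))) (-Real.log (Real.cos θ)))
      = ∫ θ in Set.Ioo 0 (Real.pi/2),
        (-Real.log (Real.cos θ)) ^ (-α) * (Real.sin θ * Real.cos θ ^ (k - 1)) := by
    refine setIntegral_congr_fun measurableSet_Ioo fun θ hθ => ?_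
    exact smul_eq_kernel hk hθ
  have hmain : ∫ θ in Set.Ioo 0 (Real.pi/2),
      (-Real.log (Real.cos θ)) ^ (-α) * (Real.sin θ * Real.cos θ ^ (k - 1))
      = (1/(k:ℝ)) ^ (1-α) * Real.Gamma (1-α) := by
    rw [← hker, ← hsub, hIoi]
  have hfinal : ∫ θ in Set.Ioo 0 (Real.pi/2),
      (-Real.log (Real.cos θ)) ^ (-α) * ((k:ℝ) * Real.sin θ * Real.cos θ ^ (k - 1))
      = (k:ℝ) * ∫ θ in Set.Ioo 0 (Real.pi/2),
        (-Real.log (Real.cos θ)) ^ (-α) * (Real.sin θ * Real.cos θ ^ (k - 1)) := by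
    rw [← integral_const_mul]
    refine setIntegral_congr_fun measurableSet_Ioo fun θ _ => ?_
    ring
  rw [hfinal, hmain]
  have hkpos : (0:ℝ) < (k:ℝ) := by
    have : 0 < k := hk
    exact_mod_cast this
  rw [one_div, Real.inv_rpow hkpos.le, ← Real.rpow_neg hkpos.le]
  have hk1 := Real.rpow_add hkpos 1 (-(1-α))
  rw [Real.rpow_one] at hk1
  rw [show (1 + -(1-α) : ℝ) = α by ring] at hk1
  rw [hk1]
  ring

lemma kernel_integrableOn (hα1 : α < 1) {k : ℕ} (hk : 1 ≤ k) :
    IntegrableOn (fun θ : ℝ =>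
        (-Real.log (Real.cos θ)) ^ (-α) * ((k:ℝ) * Real.sin θ * Real.cos θ ^ (k - 1)))
      (Set.Ioo 0 (Real.pi/2)) := by
  have hiff := MeasureTheory.integrableOn_image_iff_integrableOn_abs_deriv_smul
    measurableSet_Ioo (fun θ hθ => hasDeriv_nlc hθ) inj_nlc
    (fun t : ℝ => t ^ (-α) * Real.exp (-((k:ℝ) * t)))
  rw [img_nlc] at hiff
  have h1 := hiff.mp (g_integrable hα1 hk)
  have h2 : IntegrableOn (fun θ : ℝ =>
      (-Real.log (Real.cos θ)) ^ (-α) * (Real.sin θ * Real.cos θ ^ (k - 1)))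
      (Set.Ioo 0 (Real.pi/2)) :=
    h1.congr_fun (fun θ hθ => smul_eq_kernel hk hθ) measurableSet_Ioo
  have h3 : IntegrableOn (fun θ : ℝ =>
      (k:ℝ) * ((-Real.log (Real.cos θ)) ^ (-α) * (Real.sin θ * Real.cos θ ^ (k - 1))))
      (Set.Ioo 0 (Real.pi/2)) := h2.const_mul _
  exact h3.congr_fun (fun θ _ => by ring) measurableSet_Ioo



lemma sum_mul_expand (c : Finset (Fin n) → ℂ) (f g : (Fin n → Bool) → ℂ) :
    ∑ x : Fin n → Bool, g x * (∑ A : Finset (Fin n), c A * coeff f A * walsh A x)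
      = ∑ A : Finset (Fin n), c A * (coeff f A * (∑ x : Fin n → Bool, g x * walsh A x)) := by
  calc ∑ x : Fin n → Bool, g x * (∑ A : Finset (Fin n), c A * coeff f A * walsh A x)
      = ∑ x : Fin n → Bool, ∑ A : Finset (Fin n), g x * (c A * coeff f A * walsh A x) :=
        Finset.sum_congr rfl fun x _ => Finset.mul_sum _ _ _
    _ = ∑ A : Finset (Fin n), ∑ x : Fin n → Bool, g x * (c A * coeff f A * walsh A x) :=
        Finset.sum_comm
    _ = ∑ A : Finset (Fin n), c A * (coeff f A * (∑ x : Fin n → Bool, g x * walsh A x)) := by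
        refine Finset.sum_congr rfl fun A _ => ?_
        rw [Finset.mul_sum (univ : Finset (Fin n → Bool)) (fun x => g x * walsh A x)
          (coeff f A), Finset.mul_sum]
        exact Finset.sum_congr rfl fun x _ => by ring

lemma Kconst_integral {α : ℝ} (hα0 : 0 < α) (hα1 : α < 1/2) :
    ∫ θ in Set.Ioo 0 (Real.pi/2), (-Real.log (Real.cos θ)) ^ (-α)
      = Real.Gamma (1 - α) * Kconst α := by
  have hΓ : (0:ℝ) < Real.Gamma (1 - α) := Real.Gamma_pos_of_pos (by linarith)
  rw [Kconst]
  rw [show (∫ θ in (0:ℝ)..(Real.pi/2), (-Real.log (Real.cos θ)) ^ (-α))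
      = ∫ θ in Set.Ioo 0 (Real.pi/2), (-Real.log (Real.cos θ)) ^ (-α) by
    rw [intervalIntegral.integral_of_le (by positivity), integral_Ioc_eq_integral_Ioo]]
  field_simp

lemma Kconst_nonneg {α : ℝ} (hα0 : 0 < α) (hα1 : α < 1/2) : 0 ≤ Kconst α := by
  have hΓ : (0:ℝ) < Real.Gamma (1 - α) := Real.Gamma_pos_of_pos (by linarith)
  refine mul_nonneg (by positivity) ?_
  refine intervalIntegral.integral_nonneg (by positivity) fun u hu => ?_
  refine Real.rpow_nonneg ?_ _
  have hc : 0 ≤ Real.cos u := Real.cos_nonneg_of_mem_Icc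
    ⟨by linarith [hu.1, Real.pi_pos], hu.2⟩
  have h2 : Real.log (Real.cos u) ≤ 0 := Real.log_nonpos hc (Real.cos_le_one u)
  linarith

lemma main_core {α : ℝ} (hα0 : 0 < α) (hα1 : α < 1/2)
    (f g : (Fin n → Bool) → ℂ) (C : ℝ)
    (hbound : ∀ θ ∈ Set.Ioo 0 (Real.pi/2),
      ‖∑ x : Fin n → Bool, g x * Dop θ f x‖ ≤ C) :
    (∑ x : Fin n → Bool, g x * deltaPow α f x).re ≤ (4:ℝ)^α * Kconst α * C := by
  have hΓ : (0:ℝ) < Real.Gamma (1 - α) := Real.Gamma_pos_of_pos (by linarith)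
  set w : ℝ → ℝ := fun θ => (-Real.log (Real.cos θ)) ^ (-α) with hw
  set β : Finset (Fin n) → ℂ :=
    fun A => coeff f A * (∑ x : Fin n → Bool, g x * walsh A x) with hβ
  set κ : Finset (Fin n) → ℝ → ℝ :=
    fun A θ => (A.card : ℝ) * Real.sin θ * Real.cos θ ^ (A.card - 1) with hκ
  -- expansion of the pairing against deltaPow
  have h1 : (∑ x : Fin n → Bool, g x * deltaPow α f x).re
      = ∑ A : Finset (Fin n), ((4 * (A.card : ℝ)) ^ α) * (β A).re := by
    rw [show (∑ x : Fin n → Bool, g x * deltaPow α f x)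
        = ∑ A : Finset (Fin n), (((4 * (A.card : ℝ)) ^ α : ℝ) : ℂ) * β A from by
      simp only [deltaPow]
      exact sum_mul_expand _ f g]
    rw [Complex.re_sum]
    exact Finset.sum_congr rfl fun A _ => Complex.re_ofReal_mul _ _
  -- expansion of the pairing against Dop
  have h2 : ∀ θ : ℝ, (∑ x : Fin n → Bool, g x * Dop θ f x).re
      = ∑ A : Finset (Fin n), κ A θ * (β A).re := by
    intro θ
    rw [show (∑ x : Fin n → Bool, g x * Dop θ f x)
        = ∑ A : Finset (Fin n), ((κ A θ : ℝ) : ℂ) * β A from by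
      simp only [Dop, hκ]
      exact sum_mul_expand _ f g]
    rw [Complex.re_sum]
    exact Finset.sum_congr rfl fun A _ => Complex.re_ofReal_mul _ _
  -- integrability of each summand
  have hIntA : ∀ A : Finset (Fin n),
      IntegrableOn (fun θ => w θ * κ A θ * (β A).re) (Set.Ioo 0 (Real.pi/2)) := by
    intro A
    rcases Nat.eq_zero_or_pos A.card with hA | hA
    · have : ∀ θ : ℝ, w θ * κ A θ * (β A).re = 0 := by
        intro θ
        simp [hκ, hA]
      refine (integrable_zero _ _ _).congr ?_
      exact Filter.Eventually.of_forall fun θ => (this θ).symm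
    · have h : IntegrableOn
          (fun θ : ℝ => (-Real.log (Real.cos θ)) ^ (-α)
            * ((A.card:ℝ) * Real.sin θ * Real.cos θ ^ (A.card - 1)) * (β A).re)
          (Set.Ioo 0 (Real.pi/2)) :=
        (kernel_integrableOn (by linarith : α < 1) hA).mul_const ((β A).re)
      exact h.congr_fun (fun θ _ => by simp only [hκ, hw]) measurableSet_Ioo
  -- the per-coefficient integral identity
  have hIA : ∀ A : Finset (Fin n),
      ((4 * (A.card : ℝ)) ^ α) * (β A).re
        = (4:ℝ)^α / Real.Gamma (1-α)
            * ∫ θ in Set.Ioo 0 (Real.pi/2), w θ * κ A θ * (β A).re := by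
    intro A
    rcases Nat.eq_zero_or_pos A.card with hA | hA
    · rw [hA]
      have : (fun θ => w θ * κ A θ * (β A).re) = fun _ => (0:ℝ) := by
        funext θ
        simp [hκ, hA]
      rw [this]
      simp [Real.zero_rpow hα0.ne']
    · have hker : ∫ θ in Set.Ioo 0 (Real.pi/2), w θ * κ A θ * (β A).re
          = (∫ θ in Set.Ioo 0 (Real.pi/2), w θ * κ A θ) * (β A).re := by
        rw [← integral_mul_const]
      rw [hker, hw]
      have hki := key_integral hα0 (by linarith : α < 1) hA
      rw [show (∫ θ in Set.Ioo 0 (Real.pi/2),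
          (-Real.log (Real.cos θ)) ^ (-α) * κ A θ)
          = Real.Gamma (1 - α) * (A.card:ℝ) ^ α from hki]
      rw [Real.mul_rpow (by norm_num) (Nat.cast_nonneg _)]
      field_simp
  -- put it together
  have h3 : (∑ x : Fin n → Bool, g x * deltaPow α f x).re
      = (4:ℝ)^α / Real.Gamma (1-α)
          * ∫ θ in Set.Ioo 0 (Real.pi/2),
              w θ * (∑ x : Fin n → Bool, g x * Dop θ f x).re := by
    rw [h1, Finset.sum_congr rfl fun A _ => hIA A, ← Finset.mul_sum,
      ← integral_finset_sum univ (fun A _ => hIntA A)]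
    congr 1
    refine setIntegral_congr_fun measurableSet_Ioo fun θ _ => ?_
    rw [h2 θ, Finset.mul_sum]
    exact Finset.sum_congr rfl fun A _ => by ring
  rw [h3]
  have h4 : ∫ θ in Set.Ioo 0 (Real.pi/2),
      w θ * (∑ x : Fin n → Bool, g x * Dop θ f x).re
      ≤ ∫ θ in Set.Ioo 0 (Real.pi/2), w θ * C := by
    refine setIntegral_mono_on ?_ ?_ measurableSet_Ioo ?_
    · have := integrable_finset_sum (μ := volume.restrict (Set.Ioo 0 (Real.pi/2)))
        univ (fun A _ => hIntA A)
      refine this.congr (Filter.Eventually.of_forall fun θ => ?_)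
      show (∑ A : Finset (Fin n), w θ * κ A θ * (β A).re)
          = w θ * (∑ x : Fin n → Bool, g x * Dop θ f x).re
      rw [h2 θ, Finset.mul_sum]
      exact Finset.sum_congr rfl fun A _ => by ring
    · exact (w_integrableOn hα0 hα1).mul_const C
    · intro θ hθ
      have hw0 : 0 ≤ w θ := Real.rpow_nonneg (nlc_pos hθ).le _
      refine mul_le_mul_of_nonneg_left ?_ hw0
      exact (Complex.re_le_norm _).trans (hbound θ hθ)
  have h5 : ∫ θ in Set.Ioo 0 (Real.pi/2), w θ * C
      = Real.Gamma (1-α) * Kconst α * C := by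
    rw [integral_mul_const, Kconst_integral hα0 hα1]
  calc (4:ℝ)^α / Real.Gamma (1-α)
        * ∫ θ in Set.Ioo 0 (Real.pi/2), w θ * (∑ x, g x * Dop θ f x).re
      ≤ (4:ℝ)^α / Real.Gamma (1-α) * (Real.Gamma (1-α) * Kconst α * C) := by
        rw [← h5]
        exact mul_le_mul_of_nonneg_left h4 (by positivity)
    _ = (4:ℝ)^α * Kconst α * C := by
        field_simp


end DiscreteCube

open DiscreteCube

/-- For every `n ≥ 1`, `1 ≤ p ≤ 2`, `0 < α < 1/2` and every function `f : Ω_n → ℂ`,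
`‖Δ^α f‖_p ≤ K_α ‖ |∇f| ‖_p` where `K_α = (1/Γ(1−α)) ∫_0^{π/2} (−log cos θ)^{−α} dθ`. -/
theorem cube_fractional_laplacian_poincare (n : ℕ) (hn : 1 ≤ n) (p : ℝ)
    (hp1 : 1 ≤ p) (hp2 : p ≤ 2) (α : ℝ) (hα0 : 0 < α) (hα1 : α < 1 / 2)
    (f : (Fin n → Bool) → ℂ) :
    cLp p (deltaPow α f) ≤ Kconst α * rLp p (gradLen f) := by
  classical
  set h : (Fin n → Bool) → ℂ := deltaPow α f with hh
  set gd : (Fin n → Bool) → ℂ :=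
    fun x => (starRingEnd ℂ) (h x) * ((‖h x‖ ^ (p-2) : ℝ) : ℂ) with hgd
  have hK : 0 ≤ Kconst α := Kconst_nonneg hα0 hα1
  have h4le : (4:ℝ)^α ≤ 2 := by
    have h1 : (4:ℝ)^α ≤ (4:ℝ)^((1:ℝ)/2) :=
      Real.rpow_le_rpow_of_exponent_le (by norm_num) hα1.le
    have h2 : (4:ℝ)^((1:ℝ)/2) = 2 := by
      rw [show (4:ℝ) = 2^(2:ℕ) by norm_num, ← Real.rpow_natCast 2 2,
        ← Real.rpow_mul (by norm_num : (0:ℝ) ≤ 2)]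
      norm_num
    linarith
  have hsin : ∀ θ ∈ Set.Ioo 0 (Real.pi/2), 0 < Real.sin θ := fun θ hθ =>
    Real.sin_pos_of_pos_of_lt_pi hθ.1 (by linarith [hθ.2, Real.pi_pos])
  set N : ℝ := 2^n with hN
  have hN0 : (0:ℝ) < N := by rw [hN]; positivity
  set S : ℝ := ∑ x : Fin n → Bool, ‖h x‖ ^ p with hS
  have hS0 : 0 ≤ S := Finset.sum_nonneg fun x _ =>
    Real.rpow_nonneg (norm_nonneg _) _
  set G : ℝ := ∑ y : Fin n → Bool, gradLen f y ^ p with hG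
  have hG0 : 0 ≤ G := Finset.sum_nonneg fun y _ =>
    Real.rpow_nonneg (gradLen_nonneg f y) _
  have hp0 : (0:ℝ) < p := by linarith
  have hprod : ∀ x : Fin n → Bool, h x * gd x = ((‖h x‖ ^ p : ℝ) : ℂ) := by
    intro x
    rw [hgd]
    by_cases hx : h x = 0
    · simp [hx, Real.zero_rpow hp0.ne']
    · have habs : 0 < ‖h x‖ := norm_pos_iff.mpr hx
      calc h x * ((starRingEnd ℂ) (h x) * ((‖h x‖ ^ (p-2) : ℝ) : ℂ))
          = (h x * (starRingEnd ℂ) (h x)) * ((‖h x‖ ^ (p-2) : ℝ) : ℂ) := by ring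
        _ = ((Complex.normSq (h x) : ℝ) : ℂ) * ((‖h x‖ ^ (p-2) : ℝ) : ℂ) := by
            rw [Complex.mul_conj]
        _ = ((Complex.normSq (h x) * ‖h x‖ ^ (p-2) : ℝ) : ℂ) := by
            rw [Complex.ofReal_mul]
        _ = ((‖h x‖ ^ p : ℝ) : ℂ) := by
            congr 1
            rw [Complex.normSq_eq_norm_sq, ← Real.rpow_natCast (‖h x‖) 2,
              ← Real.rpow_add habs]
            congr 1
            push_cast
            ring
  have hre : (∑ x : Fin n → Bool, gd x * h x).re = S := by
    rw [show (∑ x : Fin n → Bool, gd x * h x) = ∑ x : Fin n → Bool, h x * gd x from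
      Finset.sum_congr rfl fun x _ => mul_comm _ _]
    rw [Finset.sum_congr rfl fun x _ => hprod x, ← Complex.ofReal_sum, Complex.ofReal_re, hS]
  have hcLp : cLp p h = (S/N)^(1/p) := by
    simp only [cLp]
    rfl
  have hrLp : rLp p (gradLen f) = (G/N)^(1/p) := by
    simp only [rLp]
    rw [show (∑ y : Fin n → Bool, |gradLen f y| ^ p) = G from
      Finset.sum_congr rfl fun y _ => by rw [abs_of_nonneg (gradLen_nonneg f y)], ← hN]
  rw [hcLp, hrLp]
  rcases eq_or_lt_of_le hp1 with hp1' | hp1'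
  · -- p = 1
    have hgd1 : ∀ x : Fin n → Bool, ‖gd x‖ ≤ 1 := by
      intro x
      rw [hgd]
      simp only [norm_mul, Complex.norm_conj, Complex.norm_real, Real.norm_eq_abs,
        abs_of_nonneg (Real.rpow_nonneg (norm_nonneg _) _)]
      by_cases hx : h x = 0
      · simp [hx]
      · have habs : 0 < ‖h x‖ := norm_pos_iff.mpr hx
        rw [show p - 2 = -1 by rw [← hp1']; norm_num, Real.rpow_neg_one,
          mul_inv_cancel₀ habs.ne']
    have hboundθ : ∀ θ ∈ Set.Ioo 0 (Real.pi/2),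
        ‖∑ x : Fin n → Bool, gd x * Dop θ f x‖
          ≤ 1/2 * ∑ y : Fin n → Bool, gradLen f y := fun θ hθ =>
      pairing_bound_one θ (hsin θ hθ) f gd hgd1
    have hcore := main_core hα0 hα1 f gd _ hboundθ
    rw [← hh, hre] at hcore
    have hGsum : G = ∑ y : Fin n → Bool, gradLen f y := by
      rw [hG]
      exact Finset.sum_congr rfl fun y _ => by rw [← hp1', Real.rpow_one]
    have hgradnn : 0 ≤ ∑ y : Fin n → Bool, gradLen f y :=
      Finset.sum_nonneg fun y _ => gradLen_nonneg f y
    have hfinal : S ≤ Kconst α * G := by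
      rw [hGsum]
      calc S ≤ (4:ℝ)^α * Kconst α * (1/2 * ∑ y : Fin n → Bool, gradLen f y) := hcore
        _ ≤ Kconst α * ∑ y : Fin n → Bool, gradLen f y := by
            nlinarith [mul_nonneg hK hgradnn]
    rw [show (1:ℝ)/p = 1 by rw [← hp1']; norm_num, Real.rpow_one, Real.rpow_one]
    rw [div_le_iff₀ hN0, mul_assoc, div_mul_cancel₀ _ hN0.ne']
    exact hfinal
  · -- p > 1
    set q := Real.conjExponent p with hq
    have hpq : p.HolderConjugate q := Real.HolderConjugate.conjExponent hp1'
    have hq2 : 2 ≤ q := by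
      rw [hq, Real.conjExponent, le_div_iff₀ (by linarith : (0:ℝ) < p - 1)]
      linarith
    have habs_gd : ∀ x : Fin n → Bool,
        ‖gd x‖ = ‖h x‖ ^ (p-1) := by
      intro x
      rw [hgd]
      simp only [norm_mul, Complex.norm_conj, Complex.norm_real, Real.norm_eq_abs,
        abs_of_nonneg (Real.rpow_nonneg (norm_nonneg _) _)]
      by_cases hx : h x = 0
      · simp [hx]
        rw [Real.zero_rpow (by linarith : p - 1 ≠ 0)]
      · have habs : 0 < ‖h x‖ := norm_pos_iff.mpr hx
        rw [show ‖h x‖ * ‖h x‖ ^ (p-2)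
            = ‖h x‖ ^ (1:ℝ) * ‖h x‖ ^ (p-2) by
          rw [Real.rpow_one], ← Real.rpow_add habs]
        congr 1
        ring
    have hgdq : (∑ x : Fin n → Bool, ‖gd x‖ ^ q) = S := by
      rw [hS]
      refine Finset.sum_congr rfl fun x _ => ?_
      rw [habs_gd x, ← Real.rpow_mul (norm_nonneg _), hpq.sub_one_mul_conj]
    have hboundθ : ∀ θ ∈ Set.Ioo 0 (Real.pi/2),
        ‖∑ x : Fin n → Bool, gd x * Dop θ f x‖
          ≤ 1/2 * (G ^ (1/p) * S ^ (1/q)) := by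
      intro θ hθ
      have hb := pairing_bound θ (hsin θ hθ) f gd hpq hq2
      rw [hgdq, ← hG] at hb
      exact hb
    have hcore := main_core hα0 hα1 f gd _ hboundθ
    rw [← hh, hre] at hcore
    rcases eq_or_lt_of_le hS0 with hS0' | hSpos
    · rw [← hS0', zero_div, Real.zero_rpow (by positivity : (1:ℝ)/p ≠ 0)]
      exact mul_nonneg hK (Real.rpow_nonneg (div_nonneg hG0 hN0.le) _)
    · have hSq : (0:ℝ) < S^(1/q) := Real.rpow_pos_of_pos hSpos _
      have hsplit : S = S^(1/p) * S^(1/q) := by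
        rw [← Real.rpow_add hSpos, one_div, one_div, hpq.inv_add_inv_eq_inv, inv_one, Real.rpow_one]
      have hkey : S^(1/p) ≤ (4:ℝ)^α * Kconst α * (1/2 * G^(1/p)) := by
        have h6 : S^(1/p) * S^(1/q)
            ≤ ((4:ℝ)^α * Kconst α * (1/2 * G^(1/p))) * S^(1/q) := by
          rw [← hsplit]
          calc S ≤ (4:ℝ)^α * Kconst α * (1/2 * (G^(1/p) * S^(1/q))) := hcore
            _ = ((4:ℝ)^α * Kconst α * (1/2 * G^(1/p))) * S^(1/q) := by ring
        exact le_of_mul_le_mul_right h6 hSq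
      have hGp0 : 0 ≤ G^(1/p) := Real.rpow_nonneg hG0 _
      have hmain : S^(1/p) ≤ Kconst α * G^(1/p) := by
        nlinarith [mul_nonneg hK hGp0]
      rw [Real.div_rpow hS0 hN0.le, Real.div_rpow hG0 hN0.le]
      have hNp : (0:ℝ) < N^(1/p) := Real.rpow_pos_of_pos hN0 _
      calc S^(1/p) / N^(1/p) ≤ (Kconst α * G^(1/p)) / N^(1/p) :=
            (div_le_div_iff_of_pos_right hNp).mpr hmain
        _ = Kconst α * (G^(1/p) / N^(1/p)) := mul_div_assoc _ _ _
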